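/- Let X be a commutative topological monoid, A a submonoid, and f : K → L a simplicial map between simplicial complexes on vertex sets [n] and [m]. Then the map f̃ : X^n → X^m defined by f̃(x)_j = ∏_{i : f(i)=j} x_i restricts to a continuous map Z_K(X,A) → Z_L(X,A). -/
import Mathlib


/-- The generalized moment-angle complex `Z_K(X,A)` as a subset of `ι → X`. -/
def momentAngle {ι X : Type} (K : Set (Finset ι)) (A : Set X) : Set (ι → X) :=
  {x | ∃ σ ∈ K, ∀ i, i ∉ σ → x i ∈ A}

theorem momentAngle_monoid_map (n m : ℕ) (X : Type) [CommMonoid X] [TopologicalSpace X]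
    [ContinuousMul X] (A : Submonoid X)
    (K : Set (Finset (Fin n))) (L : Set (Finset (Fin m)))
    (f : Fin n → Fin m) (hf : ∀ σ ∈ K, σ.image f ∈ L) :
    Continuous (fun (x : Fin n → X) (j : Fin m) =>
      ∏ i ∈ Finset.univ.filter (fun i => f i = j), x i) ∧
    Set.MapsTo (fun (x : Fin n → X) (j : Fin m) =>
        ∏ i ∈ Finset.univ.filter (fun i => f i = j), x i)
      (momentAngle K (A : Set X)) (momentAngle L (A : Set X)) := by
  constructor
  · exact continuous_pi fun j => continuous_finset_prod _ fun i _ => continuous_apply i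
  · rintro x ⟨σ, hσK, hx⟩
    refine ⟨σ.image f, hf σ hσK, fun j hj => ?_⟩
    refine A.prod_mem fun i hi => hx i fun hiσ => hj ?_
    simp only [Finset.mem_filter] at hi
    exact hi.2 ▸ Finset.mem_image_of_mem f hiσ
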